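/- arXiv:2211.01436 — 2 statements merged into one kernel-verified Lean document; each statement's English description precedes it below -/
import Mathlib

section
/- For every integer a ≥ 2, the additive submonoid of ℕ generated by the set {l_a} ∪ {l_a + l_n : n ∈ ℕ} is equal to the additive submonoid generated by the finite set {l_a, l_a + l_0, l_a + l_1, …, l_a + l_{a-1}}, and this finite set is a minimal system of generators: no proper subset of it generates the same submonoid. -/
/-- The Lucas sequence: l 0 = 2, l 1 = 1, l (n+2) = l (n+1) + l n. -/
def lucas : ℕ → ℕ
  | 0 => 2
  | 1 => 1
  | n + 2 => lucas (n + 1) + lucas n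

/-- The modified (monotone) Lucas sequence: l̃ 0 = 1, l̃ 1 = 2, l̃ n = l n for n ≥ 2. -/
def ltil : ℕ → ℕ
  | 0 => 1
  | 1 => 2
  | n + 2 => lucas (n + 2)

/-- β x : minimal number of summands in a representation of x as a sum of
modified Lucas numbers (with repetitions allowed). -/
noncomputable def beta (x : ℕ) : ℕ :=
  sInf {s : ℕ | ∃ k : ℕ, ∃ b : ℕ → ℕ,
    x = ∑ i ∈ Finset.range (k + 1), b i * ltil i ∧ s = ∑ i ∈ Finset.range (k + 1), b i}

/-- γ x : the greatest k with l̃ k ≤ x (for x ≥ 1). -/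
noncomputable def gamma (x : ℕ) : ℕ := sSup {k : ℕ | ltil k ≤ x}

/-- S a : the additive submonoid of ℕ generated by {l_a} ∪ {l_a + l_n : n ∈ ℕ}. -/
def Sset (a : ℕ) : AddSubmonoid ℕ :=
  AddSubmonoid.closure ({lucas a} ∪ {x : ℕ | ∃ n : ℕ, x = lucas a + lucas n})

/-- T a : the additive submonoid of ℕ generated by {l_a + l_n : n ∈ ℕ}. -/
def Tset (a : ℕ) : AddSubmonoid ℕ :=
  AddSubmonoid.closure {x : ℕ | ∃ n : ℕ, x = lucas a + lucas n}

lemma lucas_pos : ∀ n, 0 < lucas n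
  | 0 => by norm_num [lucas]
  | 1 => by norm_num [lucas]
  | n + 2 => by
      rw [lucas]
      have := lucas_pos (n + 1)
      omega

lemma lucas_lt_succ (n : ℕ) (hn : 2 ≤ n) : lucas n < lucas (n + 1) := by
  obtain ⟨k, rfl⟩ : ∃ k, n = k + 2 := ⟨n - 2, by omega⟩
  have h : lucas (k + 2 + 1) = lucas (k + 2) + lucas (k + 1) := rfl
  have := lucas_pos (k + 1)
  omega

lemma lucas_lt (m n : ℕ) (hm : 2 ≤ m) (h : m < n) : lucas m < lucas n := by
  induction n with
  | zero => omega
  | succ k ih =>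
    rcases Nat.lt_or_ge m k with hk | hk
    · exact (ih hk).trans (lucas_lt_succ k (by omega))
    · have : m = k := by omega
      subst this
      exact lucas_lt_succ m hm

lemma lucas_lt_of_lt (a i : ℕ) (ha : 2 ≤ a) (hi : i < a) : lucas i < lucas a := by
  have h2a : lucas 2 ≤ lucas a := by
    rcases eq_or_lt_of_le ha with h | h
    · rw [h]
    · exact le_of_lt (lucas_lt 2 a le_rfl h)
  match i, hi with
  | 0, _ => have h0 : lucas 0 = 2 := rfl; have h2 : lucas 2 = 3 := rfl; omega
  | 1, _ => have h0 : lucas 1 = 1 := rfl; have h2 : lucas 2 = 3 := rfl; omega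
  | (i + 2), hi => exact lucas_lt _ _ (by omega) hi

theorem minimal_generators_S (a : ℕ) (ha : 2 ≤ a) :
    Sset a =
      AddSubmonoid.closure
        ((insert (lucas a) ((Finset.range a).image fun i => lucas a + lucas i) : Finset ℕ) :
          Set ℕ) ∧
    ∀ Y : Finset ℕ,
      Y ⊂ insert (lucas a) ((Finset.range a).image fun i => lucas a + lucas i) →
      AddSubmonoid.closure (Y : Set ℕ) ≠ Sset a := by
  set G : Finset ℕ := insert (lucas a) ((Finset.range a).image fun i => lucas a + lucas i) with hG
  set C : AddSubmonoid ℕ := AddSubmonoid.closure (G : Set ℕ) with hC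
  -- membership facts about G
  have hla_mem : lucas a ∈ G := Finset.mem_insert_self _ _
  have hli_mem : ∀ i, i < a → lucas a + lucas i ∈ G := fun i hi =>
    Finset.mem_insert_of_mem (Finset.mem_image.mpr ⟨i, Finset.mem_range.mpr hi, rfl⟩)
  have hG_mem : ∀ y ∈ G, y = lucas a ∨ ∃ i, i < a ∧ y = lucas a + lucas i := by
    intro y hy
    rcases Finset.mem_insert.mp hy with h | h
    · exact Or.inl h
    · obtain ⟨i, hi, rfl⟩ := Finset.mem_image.mp h
      exact Or.inr ⟨i, Finset.mem_range.mp hi, rfl⟩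
  have hG_ge : ∀ y ∈ G, lucas a ≤ y := by
    intro y hy
    rcases hG_mem y hy with rfl | ⟨i, _, rfl⟩
    · exact le_rfl
    · exact Nat.le_add_right _ _
  have hG_lt : ∀ y ∈ G, y < 2 * lucas a := by
    intro y hy
    have hpos := lucas_pos a
    rcases hG_mem y hy with rfl | ⟨i, hi, rfl⟩
    · omega
    · have := lucas_lt_of_lt a i ha hi
      omega
  -- lucas n ∈ C for n ≥ a
  have key : ∀ n, a ≤ n → lucas n ∈ C := by
    intro n
    induction n using Nat.strong_induction_on with
    | _ n ih =>
      intro hn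
      rcases eq_or_lt_of_le hn with h | h
      · exact AddSubmonoid.subset_closure (by rw [← h]; exact hla_mem)
      rcases eq_or_lt_of_le (Nat.succ_le_of_lt h) with h2 | h2
      · -- n = a + 1
        have hna : n = (a - 1) + 2 := by omega
        have hx : a - 1 + 1 = a := by omega
        have : lucas n = lucas a + lucas (a - 1) := by
          rw [hna, lucas, hx]
        rw [this]
        exact AddSubmonoid.subset_closure (hli_mem (a - 1) (by omega))
      · -- n ≥ a + 2
        obtain ⟨k, rfl⟩ : ∃ k, n = k + 2 := ⟨n - 2, by omega⟩
        rw [lucas]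
        exact add_mem (ih (k + 1) (by omega) (by omega)) (ih k (by omega) (by omega))
  have hG_sub : (G : Set ℕ) ⊆ ({lucas a} ∪ {x : ℕ | ∃ n : ℕ, x = lucas a + lucas n}) := by
    intro y hy
    rcases hG_mem y hy with rfl | ⟨i, _, rfl⟩
    · exact Or.inl rfl
    · exact Or.inr ⟨i, rfl⟩
  have part1 : Sset a = C := by
    apply le_antisymm
    · rw [Sset]
      apply AddSubmonoid.closure_le.mpr
      rintro x (rfl | ⟨n, rfl⟩)
      · exact AddSubmonoid.subset_closure hla_mem
      · rcases Nat.lt_or_ge n a with hn | hn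
        · exact AddSubmonoid.subset_closure (hli_mem n hn)
        · exact add_mem (AddSubmonoid.subset_closure hla_mem) (key n hn)
    · exact AddSubmonoid.closure_le.mpr fun y hy => AddSubmonoid.subset_closure (hG_sub hy)
  refine ⟨part1, ?_⟩
  intro Y hY hne
  obtain ⟨g, hgG, hgY⟩ := Finset.exists_of_ssubset hY
  have hYG : Y ⊆ G := hY.subset
  -- g ∈ Sset a
  have hgS : g ∈ Sset a := by
    rw [part1]; exact AddSubmonoid.subset_closure hgG
  rw [← hne] at hgS
  -- closure induction: every element of closure Y is 0, in Y, or ≥ 2 * lucas a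
  have : g = 0 ∨ g ∈ Y ∨ 2 * lucas a ≤ g := AddSubmonoid.closure_induction
    (s := (Y : Set ℕ)) (motive := fun x _ => x = 0 ∨ x ∈ Y ∨ 2 * lucas a ≤ x)
    (fun x hx => Or.inr (Or.inl hx))
    (Or.inl rfl)
    (fun x y hx hy px py => by
      rcases px with rfl | px
      · simpa using py
      rcases py with rfl | py
      · simpa using (Or.inr px)
      have hx2 : lucas a ≤ x := by
        rcases px with px | px
        · exact hG_ge x (hYG px)
        · have := lucas_pos a; omega
      have hy2 : lucas a ≤ y := by
        rcases py with py | py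
        · exact hG_ge y (hYG py)
        · have := lucas_pos a; omega
      exact Or.inr (Or.inr (by omega)))
    hgS
  have hge := hG_ge g hgG
  have hlt := hG_lt g hgG
  have hpos := lucas_pos a
  rcases this with rfl | hgY' | hbig
  · omega
  · exact hgY hgY'
  · omega
end

section
/- Let a ≥ 2 be an integer and let (b_0, …, b_{a-1}) be a tuple of natural numbers with Σ_{i=0}^{a-1} b_i·l̃_i ≥ l̃_a. Then there exists a tuple (c_0, …, c_{a-1}) of natural numbers such that Σ_{i=0}^{a-1} b_i·l̃_i = l̃_a + Σ_{i=0}^{a-1} c_i·l̃_i and Σ_{i=0}^{a-1} c_i < Σ_{i=0}^{a-1} b_i. -/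
def Sf (b : ℕ → ℕ) (n : ℕ) : ℕ := ∑ i ∈ Finset.range n, b i * ltil i
def Tf (b : ℕ → ℕ) (n : ℕ) : ℕ := ∑ i ∈ Finset.range n, b i

lemma split_ltil (m : ℕ) (hm : 1 ≤ m) :
    ∃ q, ltil (m+1) = ltil m + ltil q ∧ (q + 1 = m ∨ (q = 0 ∧ m = 2)) := by
  match m, hm with
  | 1, _ => exact ⟨0, by decide, Or.inl rfl⟩
  | 2, _ => exact ⟨0, by decide, Or.inr ⟨rfl, rfl⟩⟩
  | (k+3), _ =>
    refine ⟨k+2, ?_, Or.inl rfl⟩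
    show lucas (k+4) = lucas (k+3) + lucas (k+2)
    rfl

lemma double_ltil (m : ℕ) (hm : 1 ≤ m) :
    ∃ w, w < m ∧ 2 * ltil m = ltil (m+1) + ltil w := by
  match m, hm with
  | 1, _ => exact ⟨0, by norm_num, by decide⟩
  | 2, _ => exact ⟨1, by norm_num, by decide⟩
  | 3, _ => exact ⟨0, by norm_num, by decide⟩
  | (k+4), _ =>
    refine ⟨k+2, by omega, ?_⟩
    show 2 * lucas (k+4) = lucas (k+5) + lucas (k+2)
    have h1 : lucas (k+5) = lucas (k+4) + lucas (k+3) := rfl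
    have h2 : lucas (k+4) = lucas (k+3) + lucas (k+2) := rfl
    omega

lemma sum_update_aux (f b : ℕ → ℕ) {j n : ℕ} (v : ℕ) (hj : j < n) :
    (∑ i ∈ Finset.range n, Function.update b j v i * f i) + b j * f j
      = (∑ i ∈ Finset.range n, b i * f i) + v * f j := by
  have hmem : j ∈ Finset.range n := Finset.mem_range.2 hj
  have key : (fun i => Function.update b j v i * f i)
      = Function.update (fun i => b i * f i) j (v * f j) := by
    funext i
    by_cases h : i = j <;> simp [Function.update, h]
  rw [key, Finset.sum_update_of_mem hmem, Finset.sdiff_singleton_eq_erase,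
    ← Finset.add_sum_erase _ _ hmem]
  ring

lemma Sf_update (b : ℕ → ℕ) {j n : ℕ} (v : ℕ) (hj : j < n) :
    Sf (Function.update b j v) n + b j * ltil j = Sf b n + v * ltil j :=
  sum_update_aux ltil b v hj

lemma Tf_update (b : ℕ → ℕ) {j n : ℕ} (v : ℕ) (hj : j < n) :
    Tf (Function.update b j v) n + b j = Tf b n + v := by
  have := sum_update_aux (fun _ => 1) b v hj
  simpa [Tf] using this

def Pprop (a : ℕ) : Prop :=
  ∀ b : ℕ → ℕ, ltil a ≤ Sf b a →
    ∃ c : ℕ → ℕ, Sf b a = ltil a + Sf c a ∧ Tf c a < Tf b a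

lemma Sf_succ (b : ℕ → ℕ) (n : ℕ) : Sf b (n+1) = Sf b n + b n * ltil n :=
  Finset.sum_range_succ _ _

lemma Tf_succ (b : ℕ → ℕ) (n : ℕ) : Tf b (n+1) = Tf b n + b n :=
  Finset.sum_range_succ _ _

lemma Sf_congr_lt {b c : ℕ → ℕ} (n : ℕ) (h : ∀ i, i < n → b i = c i) : Sf b n = Sf c n :=
  Finset.sum_congr rfl (fun i hi => by rw [h i (Finset.mem_range.1 hi)])

lemma Tf_congr_lt {b c : ℕ → ℕ} (n : ℕ) (h : ∀ i, i < n → b i = c i) : Tf b n = Tf c n :=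
  Finset.sum_congr rfl (fun i hi => by rw [h i (Finset.mem_range.1 hi)])

/-- Extraction of one `ltil q` from a sum supported on small indices. -/
lemma extract (q m : ℕ) (hm : q + 1 = m ∨ (q = 0 ∧ m = 2))
    (hP : 2 ≤ q → Pprop q) (b : ℕ → ℕ) (hb : ltil q ≤ Sf b m) :
    ∃ c : ℕ → ℕ, Sf b m = ltil q + Sf c m ∧ Tf c m ≤ Tf b m := by
  rcases hm with rfl | ⟨rfl, rfl⟩
  · -- m = q + 1
    by_cases hbq : 1 ≤ b q
    · obtain ⟨v, hv⟩ : ∃ v, b q = v + 1 := ⟨b q - 1, by omega⟩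
      refine ⟨Function.update b q v, ?_, ?_⟩
      · have h1 := Sf_update b (j := q) (n := q+1) v (by omega)
        rw [hv] at h1
        have h2 : (v + 1) * ltil q = v * ltil q + ltil q := by ring
        omega
      · have h1 := Tf_update b (j := q) (n := q+1) v (by omega)
        omega
    · have hbq0 : b q = 0 := by omega
      have hpeel : Sf b (q+1) = Sf b q := by rw [Sf_succ, hbq0]; omega
      have hpeelT : Tf b (q+1) = Tf b q := by rw [Tf_succ, hbq0]; omega
      by_cases hq0 : q = 0
      · exfalso
        subst hq0
        simp [Sf, ltil] at hb
        omega
      · by_cases hq1 : q = 1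
        · subst hq1
          simp only [Sf, Tf, Finset.sum_range_succ, Finset.sum_range_zero, ltil] at hb ⊢
          refine ⟨fun i => if i = 0 then b 0 - 2 else b i, by simp <;> omega, by simp <;> omega⟩
        · obtain ⟨k, rfl⟩ : ∃ k, q = k + 2 := ⟨q - 2, by omega⟩
          obtain ⟨c, hc1, hc2⟩ := hP (by omega) b (by omega)
          refine ⟨Function.update c (k+2) 0, ?_, ?_⟩
          · have h1 : Sf (Function.update c (k+2) 0) (k+2+1) = Sf c (k+2) := by
              rw [Sf_succ]
              have hcg := Sf_congr_lt (b := Function.update c (k+2) 0) (c := c) (k+2)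
                (fun i hi => Function.update_of_ne (by omega) _ _)
              simp [hcg, Function.update_self]
            omega
          · have h1 : Tf (Function.update c (k+2) 0) (k+2+1) = Tf c (k+2) := by
              rw [Tf_succ]
              have hcg := Tf_congr_lt (b := Function.update c (k+2) 0) (c := c) (k+2)
                (fun i hi => Function.update_of_ne (by omega) _ _)
              simp [hcg, Function.update_self]
            omega
  · -- q = 0, m = 2
    simp only [Sf, Tf, Finset.sum_range_succ, Finset.sum_range_zero, ltil] at hb ⊢
    by_cases hb0 : 1 ≤ b 0
    · exact ⟨fun i => if i = 0 then b 0 - 1 else b i, by simp <;> omega, by simp <;> omega⟩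
    · refine ⟨fun i => if i = 1 then b 1 - 1 else if i = 0 then 1 else b i,
        by simp <;> omega, by simp <;> omega⟩

lemma main_reduce : ∀ a, 2 ≤ a → Pprop a := by
  intro a
  induction a using Nat.strong_induction_on with
  | _ a IH =>
    intro ha b hb
    obtain ⟨m, rfl⟩ : ∃ m, a = m + 1 := ⟨a - 1, by omega⟩
    have hm1 : 1 ≤ m := by omega
    obtain ⟨q, hqid, hqm⟩ := split_ltil m hm1
    have hqlt : q < m := by omega
    have hpeel : Sf b (m+1) = Sf b m + b m * ltil m := Sf_succ b m
    have hpeelT : Tf b (m+1) = Tf b m + b m := Tf_succ b m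
    have hPq : 2 ≤ q → Pprop q := fun h2q => IH q (by omega) h2q
    rcases Nat.lt_or_ge (b m) 1 with hbm | hbm
    · -- b m = 0
      have hbm0 : b m = 0 := by omega
      rw [hbm0] at hpeel hpeelT
      simp only [Nat.zero_mul, Nat.add_zero] at hpeel hpeelT
      by_cases hm2 : 2 ≤ m
      · -- use IH at m, then extract ltil q
        have hSm : ltil m ≤ Sf b m := by omega
        obtain ⟨c, hc1, hc2⟩ := IH m (by omega) hm2 b hSm
        have hq : ltil q ≤ Sf c m := by omega
        obtain ⟨c', hd1, hd2⟩ := extract q m (by omega) hPq c hq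
        refine ⟨Function.update c' m 0, ?_, ?_⟩
        · have h1 : Sf (Function.update c' m 0) (m+1) = Sf c' m := by
            rw [Sf_succ]
            have hcg := Sf_congr_lt (b := Function.update c' m 0) (c := c') m
              (fun i hi => Function.update_of_ne (by omega) _ _)
            simp [hcg, Function.update_self]
          omega
        · have h1 : Tf (Function.update c' m 0) (m+1) = Tf c' m := by
            rw [Tf_succ]
            have hcg := Tf_congr_lt (b := Function.update c' m 0) (c := c') m
              (fun i hi => Function.update_of_ne (by omega) _ _)
            simp [hcg, Function.update_self]
          omega
      · -- m = 1, b 1 = 0, b 0 ≥ 3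
        have hm' : m = 1 := by omega
        subst hm'
        have hL : ltil (1+1) = 3 := by decide
        have h1 : Sf b (1+1) = b 0 * 1 + b 1 * 2 := by
          simp [Sf, Finset.sum_range_succ, ltil]
        have h2 : Tf b (1+1) = b 0 + b 1 := by simp [Tf, Finset.sum_range_succ]
        refine ⟨fun i => if i = 0 then b 0 - 3 else b i, ?_, ?_⟩
        · have h3 : Sf (fun i => if i = 0 then b 0 - 3 else b i) (1+1)
              = (b 0 - 3) * 1 + b 1 * 2 := by
            simp [Sf, Finset.sum_range_succ, ltil]
          have h4 : (b 0 - 3) * 1 = b 0 - 3 := by ring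
          omega
        · have h3 : Tf (fun i => if i = 0 then b 0 - 3 else b i) (1+1)
              = (b 0 - 3) + b 1 := by
            simp [Tf, Finset.sum_range_succ]
          omega
    · rcases Nat.lt_or_ge (b m) 2 with hbm2 | hbm2
      · -- b m = 1 : take ltil m from b, extract ltil q from the rest
        have hbm1 : b m = 1 := by omega
        rw [hbm1, Nat.one_mul] at hpeel
        have hq : ltil q ≤ Sf b m := by omega
        obtain ⟨c, hc1, hc2⟩ := extract q m (by omega) hPq b hq
        refine ⟨Function.update c m 0, ?_, ?_⟩
        · have h1 : Sf (Function.update c m 0) (m+1) = Sf c m := by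
            rw [Sf_succ]
            have hcg := Sf_congr_lt (b := Function.update c m 0) (c := c) m
              (fun i hi => Function.update_of_ne (by omega) _ _)
            simp [hcg, Function.update_self]
          omega
        · have h1 : Tf (Function.update c m 0) (m+1) = Tf c m := by
            rw [Tf_succ]
            have hcg := Tf_congr_lt (b := Function.update c m 0) (c := c) m
              (fun i hi => Function.update_of_ne (by omega) _ _)
            simp [hcg, Function.update_self]
          omega
      · -- b m ≥ 2 : use 2·ltil m = ltil (m+1) + ltil w
        obtain ⟨w, hw, hwid⟩ := double_ltil m hm1
        obtain ⟨v, hv⟩ : ∃ v, b m = v + 2 := ⟨b m - 2, by omega⟩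
        have e1 := Sf_update b (j := m) (n := m+1) v (by omega)
        rw [hv] at e1
        have e1' : (v + 2) * ltil m = v * ltil m + 2 * ltil m := by ring
        have e1T := Tf_update b (j := m) (n := m+1) v (by omega)
        have e2 := Sf_update (Function.update b m v) (j := w) (n := m+1)
          (Function.update b m v w + 1) (by omega)
        have e2' : (Function.update b m v w + 1) * ltil w
            = Function.update b m v w * ltil w + ltil w := by ring
        have e2T := Tf_update (Function.update b m v) (j := w) (n := m+1)
          (Function.update b m v w + 1) (by omega)
        refine ⟨Function.update (Function.update b m v) w (Function.update b m v w + 1),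
          ?_, ?_⟩
        · omega
        · omega


theorem reduce_by_ltil (a : ℕ) (ha : 2 ≤ a) (b : ℕ → ℕ)
    (hb : ltil a ≤ ∑ i ∈ Finset.range a, b i * ltil i) :
    ∃ c : ℕ → ℕ,
      ∑ i ∈ Finset.range a, b i * ltil i = ltil a + ∑ i ∈ Finset.range a, c i * ltil i ∧
      ∑ i ∈ Finset.range a, c i < ∑ i ∈ Finset.range a, b i := by
  exact main_reduce a ha b hb
end
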